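/- Let N > 5040 be an integer and p a prime with p ≥ N not dividing N. Then G(N) > G(Np). -/

import Mathlib

/-- `G n = σ(n) / (n * log log n)`. -/
noncomputable def G (n : ℕ) : ℝ :=
  (∑ d ∈ n.divisors, (d : ℝ)) / (n * Real.log (Real.log n))

theorem stmt_11 (N p : ℕ) (hN : N > 5040) (hp : p.Prime) (hge : p ≥ N)
    (hpN : ¬ p ∣ N) : G N > G (N * p) := by
  have hN0 : 0 < N := by omega
  have hp0 : 0 < p := hp.pos
  have hcop : N.Coprime p := (hp.coprime_iff_not_dvd.mpr hpN).symm
  -- sigma of N*p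
  have hsig : (∑ d ∈ (N * p).divisors, (d : ℕ)) =
      (∑ d ∈ N.divisors, d) * (1 + p) := by
    have h1 := ArithmeticFunction.isMultiplicative_sigma (k := 1)
    have h2 := h1.map_mul_of_coprime hcop
    simp only [ArithmeticFunction.sigma_one_apply] at h2
    rw [h2, hp.divisors]
    rw [Finset.sum_insert (by simp [hp.ne_one.symm]), Finset.sum_singleton]
  have hsigR : (∑ d ∈ (N * p).divisors, (d : ℝ)) =
      (∑ d ∈ N.divisors, (d : ℝ)) * (1 + p) := by
    have := congrArg (fun n : ℕ => (n : ℝ)) hsig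
    push_cast at this ⊢
    simpa using this
  set S : ℝ := ∑ d ∈ N.divisors, (d : ℝ) with hS
  have hSpos : 0 < S := by
    apply Finset.sum_pos
    · intro i hi
      have := Nat.pos_of_mem_divisors hi
      exact_mod_cast this
    · exact ⟨N, Nat.mem_divisors_self N hN0.ne'⟩
  have hNR : (5041 : ℝ) ≤ (N : ℝ) := by exact_mod_cast hN
  have hNpos : (0 : ℝ) < N := by positivity
  have hppos : (0 : ℝ) < p := by exact_mod_cast hp0
  have hexpN : Real.exp 1 < (N : ℝ) := by
    have := Real.exp_one_lt_d9
    linarith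
  have hlogN : 1 < Real.log N := (Real.lt_log_iff_exp_lt hNpos).mpr hexpN
  have hL1 : 0 < Real.log (Real.log N) := Real.log_pos hlogN
  set L1 : ℝ := Real.log (Real.log N)
  set L2 : ℝ := Real.log (Real.log (N * p))
  have hlogmul : Real.log ((N : ℝ) * p) = Real.log N + Real.log p :=
    Real.log_mul hNpos.ne' hppos.ne'
  have hlogp : Real.log N ≤ Real.log p :=
    Real.log_le_log hNpos (by exact_mod_cast hge)
  have hL2ge : Real.log 2 + L1 ≤ L2 := by
    have h2 : (2 : ℝ) * Real.log N ≤ Real.log ((N : ℝ) * p) := by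
      rw [hlogmul]; linarith
    have h3 : Real.log (2 * Real.log N) ≤ L2 := by
      exact Real.log_le_log (by positivity) h2
    rw [Real.log_mul (by norm_num) (by linarith)] at h3
    exact h3
  have hL2 : 0 < L2 := lt_of_lt_of_le (by positivity) hL2ge
  -- key: L1 < p * log 2
  have hkey : L1 < p * Real.log 2 := by
    have h1 : L1 < Real.log N := by
      have := Real.log_lt_sub_one_of_pos (x := Real.log N) (by linarith) (by linarith)
      linarith
    have h2 : Real.log p < (p : ℝ) * Real.log 2 := by
      have hlt : (p : ℝ) < (2 : ℝ) ^ p := by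
        exact_mod_cast Nat.lt_two_pow_self (n := p)
      have := Real.log_lt_log hppos hlt
      rwa [Real.log_pow] at this
    linarith
  have hmain : (1 + (p : ℝ)) * L1 < (p : ℝ) * L2 := by
    have : (p : ℝ) * (Real.log 2 + L1) ≤ (p : ℝ) * L2 :=
      mul_le_mul_of_nonneg_left hL2ge (le_of_lt hppos)
    nlinarith
  -- conclude
  have hGNp : G (N * p) = (S * (1 + p)) / (((N : ℝ) * p) * L2) := by
    unfold G
    rw [hsigR]
    have : ((N * p : ℕ) : ℝ) = (N : ℝ) * p := by push_cast; ring
    rw [this]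
  have hGN : G N = S / ((N : ℝ) * L1) := rfl
  rw [hGN, hGNp, gt_iff_lt, div_lt_div_iff₀ (by positivity) (by positivity)]
  have expand : S * (1 + (p : ℝ)) * ((N : ℝ) * L1) = (S * N) * ((1 + p) * L1) := by ring
  have expand2 : S * (((N : ℝ) * p) * L2) = (S * N) * ((p : ℝ) * L2) := by ring
  rw [expand, expand2]
  exact mul_lt_mul_of_pos_left hmain (by positivity)
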